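/- Let D be a digraph and let u and v be two non-sink vertices of D that are true twins in D (i.e., N⁺(u) = N⁺(v) and N⁻(u) = N⁻(v)). Then u and v are true twins in the (1,2)-step competition graph C_{1,2}(D), i.e., they have the same closed neighborhood in C_{1,2}(D). -/

import Mathlib

/-- Adjacency in the (1,2)-step competition graph `C_{1,2}(D)` of the (simple) digraph `D`
with arc relation `A`: there is a vertex `w` distinct from `u` and `v` such that either
(`d_{D-v}(u,w) ≤ 1` and `d_{D-u}(v,w) ≤ 2`) or (`d_{D-u}(v,w) ≤ 1` and `d_{D-v}(u,w) ≤ 2`). -/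
def CompAdj {V : Type*} (A : V → V → Prop) (u v : V) : Prop :=
  u ≠ v ∧ ∃ w, w ≠ u ∧ w ≠ v ∧
    ((A u w ∧ (A v w ∨ ∃ z, z ≠ u ∧ A v z ∧ A z w)) ∨
     (A v w ∧ (A u w ∨ ∃ z, z ≠ v ∧ A u z ∧ A z w)))

/-- The (1,2)-step competition graph `C_{1,2}(D)` of the digraph with arc relation `A`. -/
def compGraph {V : Type*} (A : V → V → Prop) : SimpleGraph V where
  Adj := CompAdj A
  symm := by
    refine ⟨?_⟩
    rintro u v ⟨hne, w, h1, h2, h3⟩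
    exact ⟨hne.symm, w, h2, h1, h3.symm⟩
  loopless := by refine ⟨?_⟩; rintro u ⟨hne, -⟩; exact hne rfl

/-- Vertices `u` and `v` `(1,2)`-compete in the digraph with arc relation `A`: there is a
vertex `w` distinct from `u` and `v` such that either (`u → w` and there is a directed path
of length 2 from `v` to `w` not traversing `u`) or vice versa. -/
def OneTwoCompete {V : Type*} (A : V → V → Prop) (u v : V) : Prop :=
  ∃ w, w ≠ u ∧ w ≠ v ∧
    ((A u w ∧ ∃ z, z ≠ u ∧ A v z ∧ A z w) ∨
     (A v w ∧ ∃ z, z ≠ v ∧ A u z ∧ A z w))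

/-- `A` is an orientation of the complete multipartite graph whose parts are the fibres of
`p : V → ι`: no arcs within a part, and exactly one arc between any two vertices in
different parts. -/
def IsCompleteMultipartiteOrientation {V ι : Type*} (A : V → V → Prop) (p : V → ι) : Prop :=
  (∀ u v : V, p u = p v → ¬ A u v) ∧
  ∀ u v : V, p u ≠ p v → (A u v ∨ A v u) ∧ ¬ (A u v ∧ A v u)

/-- A multipartite tournament: an orientation of a complete `k`-partite graph with `k ≥ 3`,
whose partite sets are the (nonempty) fibres of `p : V → ι`. -/
def IsMultipartiteTournament {V ι : Type*} [Fintype ι] (A : V → V → Prop) (p : V → ι) : Prop :=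
  Function.Surjective p ∧ 3 ≤ Fintype.card ι ∧ IsCompleteMultipartiteOrientation A p

/-- A multipartite tournament is tight if every partite set is a clique in `C_{1,2}(D)`. -/
def IsTight {V ι : Type*} (A : V → V → Prop) (p : V → ι) : Prop :=
  ∀ u v : V, u ≠ v → p u = p v → CompAdj A u v

/-- A tournament: an orientation of a complete graph. -/
def IsTournament {V : Type*} (A : V → V → Prop) : Prop :=
  (∀ u, ¬ A u u) ∧ ∀ u v : V, u ≠ v → (A u v ∨ A v u) ∧ ¬ (A u v ∧ A v u)

lemma compAdj_transfer {V : Type*} (A : V → V → Prop) (hA : Irreflexive A)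
    (u v : V) (huv : u ≠ v)
    (hout : ∀ w, A u w ↔ A v w) (hin : ∀ w, A w u ↔ A w v)
    (x : V) (hxv : x ≠ v) (h : CompAdj A u x) : CompAdj A v x := by
  obtain ⟨hne, w, hwu, hwx, hc⟩ := h
  have hAuv : ¬ A u v := fun h => hA v ((hout v).mp h)
  have hvx : v ≠ x := fun h => hxv h.symm
  by_cases hwv : w = v
  · subst hwv
    rcases hc with ⟨h1, _⟩ | ⟨h1, h2⟩
    · exact absurd h1 hAuv
    · rcases h2 with h2 | ⟨z, hz, hz1, hz2⟩
      · exact absurd h2 hAuv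
      · exact ⟨hvx, u, huv, hne,
          Or.inr ⟨(hin x).mpr h1, Or.inr ⟨z, hz, (hout z).mp hz1, (hin z).mpr hz2⟩⟩⟩
  · refine ⟨hvx, w, hwv, hwx, ?_⟩
    rcases hc with ⟨h1, h2⟩ | ⟨h1, h2⟩
    · refine Or.inl ⟨(hout w).mp h1, ?_⟩
      rcases h2 with h2 | ⟨z, hz, hz1, hz2⟩
      · exact Or.inl h2
      · by_cases hzv : z = v
        · subst hzv
          exact Or.inr ⟨u, huv, (hin x).mpr hz1, (hout w).mpr hz2⟩
        · exact Or.inr ⟨z, hzv, hz1, hz2⟩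
    · refine Or.inr ⟨h1, ?_⟩
      rcases h2 with h2 | ⟨z, hz, hz1, hz2⟩
      · exact Or.inl ((hout w).mp h2)
      · exact Or.inr ⟨z, hz, (hout z).mp hz1, hz2⟩

lemma compAdj_of_twins {V : Type*} (A : V → V → Prop) (hA : Irreflexive A)
    (u v : V) (huv : u ≠ v) (hu : ∃ w, A u w)
    (hout : ∀ w, A u w ↔ A v w) : CompAdj A u v := by
  obtain ⟨w, hw⟩ := hu
  have hwu : w ≠ u := fun h => hA u (h ▸ hw)
  have hwv : w ≠ v := fun h => hA v ((hout v).mp (h ▸ hw))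
  exact ⟨huv, w, hwu, hwv, Or.inl ⟨hw, Or.inl ((hout w).mp hw)⟩⟩

/-- Let `D` be a digraph and let `u` and `v` be two non-sink vertices of `D`
that are true twins in `D` (same out-neighborhood and same in-neighborhood). Then `u` and
`v` are true twins in `C_{1,2}(D)`, i.e., they have the same closed neighborhood in
`C_{1,2}(D)`. -/
theorem stmt9 {V : Type*} [Fintype V] (A : V → V → Prop) (hA : Irreflexive A)
    (u v : V) (huv : u ≠ v) (hu : ∃ w, A u w) (hv : ∃ w, A v w)
    (hout : ∀ w, A u w ↔ A v w) (hin : ∀ w, A w u ↔ A w v) :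
    insert u ((compGraph A).neighborSet u) = insert v ((compGraph A).neighborSet v) := by
  have hout' : ∀ w, A v w ↔ A u w := fun w => (hout w).symm
  have hin' : ∀ w, A w v ↔ A w u := fun w => (hin w).symm
  have huvAdj : CompAdj A u v := compAdj_of_twins A hA u v huv hu hout
  have hvuAdj : CompAdj A v u := (compGraph A).adj_symm huvAdj
  ext x
  simp only [Set.mem_insert_iff, SimpleGraph.mem_neighborSet]
  constructor
  · rintro (rfl | h)
    · exact Or.inr hvuAdj
    · by_cases hxv : x = v
      · exact Or.inl hxv
      · exact Or.inr (compAdj_transfer A hA u v huv hout hin x hxv h)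
  · rintro (rfl | h)
    · exact Or.inr huvAdj
    · by_cases hxu : x = u
      · exact Or.inl hxu
      · exact Or.inr (compAdj_transfer A hA v u huv.symm hout' hin' x hxu h)
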